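/- For every 0 ≤ k ≤ d, the k-th spherical intrinsic volume is a valuation on polyhedral cones: for every polyhedral cone C ⊆ ℝ^d and every linear hyperplane H ⊆ ℝ^d with closed halfspaces H^≤, H^≥, v_k(C) = v_k(C ∩ H^≤) + v_k(C ∩ H^≥) − v_k(C ∩ H). -/

import Mathlib

open scoped Pointwise
open MeasureTheory RealInnerProductSpace

noncomputable section

/-- Euclidean space `ℝ^d`. -/
abbrev Ed (d : ℕ) : Type := EuclideanSpace ℝ (Fin d)

/-- A polyhedral cone in `ℝ^d`: a (nonempty) finite intersection of closed linear
halfspaces; it automatically contains the origin. -/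
def IsPolyCone (d : ℕ) (C : Set (Ed d)) : Prop :=
  ∃ s : Finset (Ed d), C = {x | ∀ c ∈ s, ⟪c, x⟫ ≤ 0}

/-- A face of a cone `C`: the intersection of `C` with a supporting linear hyperplane
(`C` itself being a face, for `c = 0`). -/
def IsFaceOf (d : ℕ) (C F : Set (Ed d)) : Prop :=
  ∃ c : Ed d, (∀ x ∈ C, ⟪c, x⟫ ≤ 0) ∧ F = {x ∈ C | ⟪c, x⟫ = 0}

/-- Dimension of a subset of `ℝ^d` (dimension of its linear span). -/
def setDim (d : ℕ) (S : Set (Ed d)) : ℕ :=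
  Module.finrank ℝ (Submodule.span ℝ S)

/-- Dimension of the lineality space of a cone `C`, i.e. of the maximal linear
subspace `C ∩ (-C)` contained in `C`. -/
def linealDim (d : ℕ) (C : Set (Ed d)) : ℕ :=
  setDim d (C ∩ (-C))

/-- A fan: a finite collection of polyhedral cones, pairwise meeting in common faces,
and all having the same linear span. -/
def IsFan (d : ℕ) (N : Set (Set (Ed d))) : Prop :=
  N.Finite ∧ (∀ C ∈ N, IsPolyCone d C) ∧
    (∀ C ∈ N, ∀ C' ∈ N, IsFaceOf d C (C ∩ C') ∧ IsFaceOf d C' (C ∩ C')) ∧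
    (∀ C ∈ N, ∀ C' ∈ N, Submodule.span ℝ C = Submodule.span ℝ C')

/-- The restriction `N ∩ S` of a fan to a set `S`. -/
def fanInter (d : ℕ) (N : Set (Set (Ed d))) (S : Set (Ed d)) : Set (Set (Ed d)) :=
  {D | ∃ C ∈ N, (intrinsicInterior ℝ C ∩ S).Nonempty ∧ D = C ∩ S}

/-- A fan valuation: `φ ∅ = 0` and `φ(N) = φ(N ∩ H^≤) + φ(N ∩ H^≥) - φ(N ∩ H)`
for every fan `N` and every linear hyperplane `H` of `lin N` (encoded by a nonzero
normal vector `c ∈ lin N`). -/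
def IsFanValuation (d : ℕ) {G : Type*} [AddCommGroup G] (φ : Set (Set (Ed d)) → G) : Prop :=
  φ ∅ = 0 ∧
    ∀ N : Set (Set (Ed d)), IsFan d N →
      ∀ c : Ed d, c ≠ 0 → (∀ C ∈ N, c ∈ Submodule.span ℝ C) →
        φ N = φ (fanInter d N {x | ⟪c, x⟫ ≤ 0}) + φ (fanInter d N {x | 0 ≤ ⟪c, x⟫})
              - φ (fanInter d N {x | ⟪c, x⟫ = 0})

/-- A rotation of `ℝ^d`: a linear isometry of determinant `1`. -/
def IsRotation (d : ℕ) (g : Ed d ≃ₗᵢ[ℝ] Ed d) : Prop :=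
  LinearMap.det (g.toLinearEquiv : Ed d →ₗ[ℝ] Ed d) = 1

/-- The image fan `g · N`. -/
def fanMap (d : ℕ) (g : Ed d ≃ₗᵢ[ℝ] Ed d) (N : Set (Set (Ed d))) : Set (Set (Ed d)) :=
  (fun C => g '' C) '' N

/-- `H` is a linear hyperplane of the subspace `L`. -/
def IsHyperplaneOf (d : ℕ) (H L : Submodule ℝ (Ed d)) : Prop :=
  H ≤ L ∧ Module.finrank ℝ H + 1 = Module.finrank ℝ L

/-- (The data of) a hyperplane arrangement: an ambient subspace together with a finite
set of subspaces (intended: hyperplanes of the ambient space). -/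
structure Arrangement (d : ℕ) where
  space : Submodule ℝ (Ed d)
  hyps : Finset (Submodule ℝ (Ed d))

variable {d : ℕ}

/-- The data are an actual arrangement: each member is a hyperplane of the ambient
subspace. -/
def Arrangement.IsArrangement (A : Arrangement d) : Prop :=
  ∀ H ∈ A.hyps, IsHyperplaneOf d H A.space

/-- A `k`-singleton: an arrangement consisting of a single hyperplane of a
`k`-dimensional subspace. -/
def Arrangement.IsSingletonArr (A : Arrangement d) (k : ℕ) : Prop :=
  A.IsArrangement ∧ A.hyps.card = 1 ∧ Module.finrank ℝ A.space = k

/-- The complement `L \ ∪ A` of an arrangement in its ambient subspace. -/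
def arrComplement (A : Arrangement d) : Set (Ed d) :=
  (A.space : Set (Ed d)) \ ⋃ H ∈ A.hyps, (H : Set (Ed d))

/-- The fan of an arrangement: closures of the connected components of the complement. -/
def arrFan (A : Arrangement d) : Set (Set (Ed d)) :=
  {C | ∃ x ∈ arrComplement A, C = closure (connectedComponentIn (arrComplement A) x)}

/-- Deletion `A ∖ H`. -/
def Arrangement.delete (A : Arrangement d) (H : Submodule ℝ (Ed d)) : Arrangement d :=
  letI := Classical.decEq (Submodule ℝ (Ed d))
  ⟨A.space, A.hyps.erase H⟩

/-- Restriction `A / H`. -/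
def Arrangement.restrict (A : Arrangement d) (H : Submodule ℝ (Ed d)) : Arrangement d :=
  letI := Classical.decEq (Submodule ℝ (Ed d))
  ⟨H, (A.hyps.erase H).image (fun H' => H' ⊓ H)⟩

open Polynomial in
/-- The recursive definition of the unsigned characteristic polynomial:
`χ̄_A(t) = t^k + t^(k-1)` for a `k`-singleton, and
`χ̄_A = χ̄_{A∖H} + χ̄_{A/H}` for `H ∈ A` otherwise.  Its coefficients are the unsigned
Whitney numbers of the first kind. -/
inductive IsCharPoly (d : ℕ) : Arrangement d → Polynomial ℤ → Prop
  | singleton (A : Arrangement d) (k : ℕ) (hk : 1 ≤ k) (hA : A.IsSingletonArr k) :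
      IsCharPoly d A (X ^ k + X ^ (k - 1))
  | deletion_restriction (A : Arrangement d) (H : Submodule ℝ (Ed d)) (hH : H ∈ A.hyps)
      (hcard : 1 < A.hyps.card) (p q : Polynomial ℤ)
      (hp : IsCharPoly d (A.delete H) p) (hq : IsCharPoly d (A.restrict H) q) :
      IsCharPoly d A (p + q)

open Classical in
/-- The metric projection (nearest-point map) of a set `C ⊆ ℝ^d`: the unique nearest
point when it exists (as it does for nonempty closed convex sets). -/
def metricProj (d : ℕ) (C : Set (Ed d)) (x : Ed d) : Ed d :=
  if h : ∃! y, y ∈ C ∧ ∀ z ∈ C, dist x y ≤ dist x z then h.choose else 0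

/-- The normal cone `N_F C` of `C` at a face `F`. -/
def normalCone (d : ℕ) (C F : Set (Ed d)) : Set (Ed d) :=
  {c | ∀ x ∈ C, ∀ y ∈ F, ⟪c, x⟫ ≤ ⟪c, y⟫}

/-- `Π_k(C)`: points `x` whose nearest point of `C` lies in the relative interior of a
`k`-dimensional face of `C`. -/
def Pik (d : ℕ) (C : Set (Ed d)) (k : ℕ) : Set (Ed d) :=
  {x | ∃ F, IsFaceOf d C F ∧ metricProj d C x ∈ intrinsicInterior ℝ F ∧ setDim d F = k}

/-- The `k`-th spherical intrinsic volume of a cone. -/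
def sphIntrinsicVol (d : ℕ) (C : Set (Ed d)) (k : ℕ) : ℝ :=
  (volume (Pik d C k ∩ Metric.closedBall (0 : Ed d) 1)).toReal /
    (volume (Metric.closedBall (0 : Ed d) 1)).toReal

/-- The `k`-th spherical intrinsic volume of a fan. -/
def fanIntrinsicVol (d : ℕ) (N : Set (Set (Ed d))) (k : ℕ) : ℝ :=
  ∑ᶠ C ∈ N, sphIntrinsicVol d C k

/-- The indicator-valued spherical intrinsic volume
`V_k(C) = Σ_F [Π_F(C)]`, the sum over all `k`-dimensional faces `F` of `C` of the
indicator functions of `Π_F(C) = π_C⁻¹(F)`. -/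
def Vk (d : ℕ) (C : Set (Ed d)) (k : ℕ) (x : Ed d) : ℤ :=
  ∑ᶠ F ∈ {F | IsFaceOf d C F ∧ setDim d F = k},
    Set.indicator (metricProj d C ⁻¹' F) (fun _ => (1 : ℤ)) x

/-- The polar cone `C^∨`. -/
def polarCone (d : ℕ) (C : Set (Ed d)) : Set (Ed d) :=
  {c | ∀ x ∈ C, ⟪c, x⟫ ≤ 0}

/-- The lattice of flats of an arrangement: all intersections of subfamilies (the empty
intersection being the ambient space). -/
def flats (A : Arrangement d) : Set (Submodule ℝ (Ed d)) :=
  {L | ∃ S : Finset (Submodule ℝ (Ed d)), S ⊆ A.hyps ∧ L = A.space ⊓ S.inf id}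

/-- `μ` is the Möbius function of the lattice of flats of `A`, ordered by *reverse*
inclusion: `μ(L,L) = 1` and `μ(L,M) = - Σ_{L ≼ Z ≺ M} μ(L,Z)` for `M ⊊ L`. -/
def IsMobiusOf (A : Arrangement d)
    (μ : Submodule ℝ (Ed d) → Submodule ℝ (Ed d) → ℤ) : Prop :=
  (∀ L ∈ flats A, μ L L = 1) ∧
    ∀ L ∈ flats A, ∀ M ∈ flats A, M < L →
      μ L M = -∑ᶠ Z ∈ {Z | Z ∈ flats A ∧ Z ≤ L ∧ M < Z}, μ L Z

/-- A polyhedron: a nonempty finite intersection of closed affine halfspaces. -/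
def IsPolyhedron (d : ℕ) (Q : Set (Ed d)) : Prop :=
  Q.Nonempty ∧ ∃ s : Finset (Ed d × ℝ), Q = {x | ∀ p ∈ s, ⟪p.1, x⟫ ≤ p.2}

/-- A nonempty face of a polyhedron `Q`. -/
def IsFaceOfPolyhedron (d : ℕ) (Q F : Set (Ed d)) : Prop :=
  F.Nonempty ∧ ∃ (c : Ed d) (α : ℝ), (∀ x ∈ Q, ⟪c, x⟫ ≤ α) ∧
    F = {x ∈ Q | ⟪c, x⟫ = α}

/-- Dimension of a subset of `ℝ^d` as dimension of its affine hull. -/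
def polyDim (d : ℕ) (S : Set (Ed d)) : ℕ :=
  Module.finrank ℝ (vectorSpan ℝ S)

/-- The Euler characteristic `ε(Q) = Σ_F (-1)^(dim F)` of a polyhedron. -/
def eulerChar (d : ℕ) (Q : Set (Ed d)) : ℤ :=
  ∑ᶠ F ∈ {F | IsFaceOfPolyhedron d Q F}, (-1 : ℤ) ^ polyDim d F

end

set_option maxHeartbeats 1000000
noncomputable section
open Metric Set

variable {d : ℕ}

/-- The cone defined by a finite set of outer normals. -/
def coneOf (d : ℕ) (t : Finset (Ed d)) : Set (Ed d) := {x | ∀ c ∈ t, ⟪c, x⟫ ≤ 0}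

lemma zero_mem_coneOf (t : Finset (Ed d)) : (0 : Ed d) ∈ coneOf d t := by
  intro c hc; simp

lemma isClosed_coneOf (t : Finset (Ed d)) : IsClosed (coneOf d t) := by
  have : coneOf d t = ⋂ c ∈ (t : Set (Ed d)), {x : Ed d | ⟪c, x⟫ ≤ 0} := by
    ext x; simp [coneOf]
  rw [this]
  exact isClosed_biInter fun c _ => isClosed_le (Continuous.inner continuous_const continuous_id) continuous_const

lemma convex_coneOf (t : Finset (Ed d)) : Convex ℝ (coneOf d t) := by
  intro x hx y hy a b ha hb hab
  intro c hc
  have hx' := hx c hc; have hy' := hy c hc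
  have h : ⟪c, a • x + b • y⟫ = a * ⟪c, x⟫ + b * ⟪c, y⟫ := by
    rw [inner_add_right, real_inner_smul_right, real_inner_smul_right]
  show ⟪c, a • x + b • y⟫ ≤ 0
  rw [h]; nlinarith

/-- Existence and uniqueness of the nearest point. -/
lemma nearest_existsUnique {D : Set (Ed d)} (hne : D.Nonempty) (hcl : IsClosed D)
    (hcv : Convex ℝ D) (x : Ed d) :
    ∃! y, y ∈ D ∧ ∀ z ∈ D, dist x y ≤ dist x z := by
  haveI : Nonempty ↥D := hne.to_subtype
  have hbdd : BddBelow (Set.range fun w : ↥D => ‖x - (w : Ed d)‖) := by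
    refine ⟨0, fun r hr => ?_⟩
    obtain ⟨w, rfl⟩ := hr
    exact norm_nonneg _
  obtain ⟨v, hv, hmin⟩ := exists_norm_eq_iInf_of_complete_convex hne hcl.isComplete hcv x
  have hvar : ∀ w ∈ D, ⟪x - v, w - v⟫ ≤ 0 :=
    (norm_eq_iInf_iff_real_inner_le_zero hcv hv).1 hmin
  have key : ∀ y, (y ∈ D ∧ ∀ z ∈ D, dist x y ≤ dist x z) → y = v := by
    rintro y ⟨hy, hymin⟩
    have hvar' : ∀ w ∈ D, ⟪x - y, w - y⟫ ≤ 0 := by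
      refine (norm_eq_iInf_iff_real_inner_le_zero hcv hy).1 ?_
      refine le_antisymm (le_ciInf fun w => ?_) ?_
      · have := hymin w w.2
        rwa [dist_eq_norm, dist_eq_norm] at this
      · exact ciInf_le hbdd ⟨y, hy⟩
    have h1 := hvar y hy
    have h2 := hvar' v hv
    have hinner : ⟪y - v, y - v⟫ ≤ 0 := by
      have e : ⟪x - v, y - v⟫ - ⟪x - y, y - v⟫ = ⟪y - v, y - v⟫ := by
        rw [← inner_sub_left]; congr 1; abel
      have h2' : (0:ℝ) ≤ ⟪x - y, y - v⟫ := by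
        have e2 : (v : Ed d) - y = -(y - v) := by abel
        rw [e2, inner_neg_right] at h2; linarith
      linarith
    have h0 : y - v = 0 := by
      have hnn := real_inner_self_nonneg (x := y - v)
      exact inner_self_eq_zero.1 (le_antisymm hinner hnn)
    exact sub_eq_zero.1 h0
  refine ⟨v, ⟨hv, fun z hz => ?_⟩, key⟩
  rw [dist_eq_norm, dist_eq_norm, hmin]
  exact ciInf_le hbdd ⟨z, hz⟩

lemma metricProj_spec {D : Set (Ed d)} (hne : D.Nonempty) (hcl : IsClosed D)
    (hcv : Convex ℝ D) (x : Ed d) :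
    metricProj d D x ∈ D ∧ ∀ z ∈ D, dist x (metricProj d D x) ≤ dist x z := by
  have h := nearest_existsUnique hne hcl hcv x
  rw [metricProj, dif_pos h]
  exact h.choose_spec.1

lemma metricProj_eq_of {D : Set (Ed d)} (hne : D.Nonempty) (hcl : IsClosed D)
    (hcv : Convex ℝ D) (x y : Ed d) (hy : y ∈ D) (hmin : ∀ z ∈ D, dist x y ≤ dist x z) :
    metricProj d D x = y := by
  obtain ⟨v, hv, huniq⟩ := nearest_existsUnique hne hcl hcv x
  have h1 : metricProj d D x = v := huniq _ (metricProj_spec hne hcl hcv x)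
  have h2 : y = v := huniq _ ⟨hy, hmin⟩
  rw [h1, h2]

/-- Variational characterization. -/
lemma min_iff_var {D : Set (Ed d)} (hcv : Convex ℝ D) {y : Ed d} (hy : y ∈ D) (x : Ed d) :
    (∀ z ∈ D, dist x y ≤ dist x z) ↔ ∀ z ∈ D, ⟪x - y, z - y⟫ ≤ 0 := by
  haveI : Nonempty ↥D := ⟨⟨y, hy⟩⟩
  have hbdd : BddBelow (Set.range fun w : ↥D => ‖x - (w : Ed d)‖) := by
    refine ⟨0, fun r hr => ?_⟩
    obtain ⟨w, rfl⟩ := hr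
    exact norm_nonneg _
  constructor
  · intro hmin
    refine (norm_eq_iInf_iff_real_inner_le_zero hcv hy).1 ?_
    refine le_antisymm (le_ciInf fun w => ?_)
      (ciInf_le hbdd ⟨y, hy⟩)
    have := hmin w w.2; rwa [dist_eq_norm, dist_eq_norm] at this
  · intro hvar z hz
    have h := hvar z hz
    rw [dist_eq_norm, dist_eq_norm]
    have e : x - z = (x - y) - (z - y) := by abel
    have hsq : ‖x - z‖ ^ 2 = ‖x - y‖ ^ 2 - 2 * ⟪x - y, z - y⟫ + ‖z - y‖ ^ 2 := by
      rw [e, norm_sub_sq_real]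
    nlinarith [norm_nonneg (x - z), norm_nonneg (x - y), sq_nonneg ‖z - y‖]

lemma metricProj_var {D : Set (Ed d)} (hne : D.Nonempty) (hcl : IsClosed D)
    (hcv : Convex ℝ D) (x : Ed d) :
    ∀ z ∈ D, ⟪x - metricProj d D x, z - metricProj d D x⟫ ≤ 0 := by
  obtain ⟨hmem, hmin⟩ := metricProj_spec hne hcl hcv x
  exact (min_iff_var hcv hmem x).1 hmin

lemma metricProj_eq_self {D : Set (Ed d)} (hne : D.Nonempty) (hcl : IsClosed D)
    (hcv : Convex ℝ D) {x : Ed d} (hx : x ∈ D) : metricProj d D x = x :=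
  metricProj_eq_of hne hcl hcv x x hx (fun z hz => by simp [dist_nonneg])

/-- If the projection onto a superset lands in the subset, they agree. -/
lemma metricProj_subset_eq {D E : Set (Ed d)} (hne : E.Nonempty) (hcl : IsClosed E)
    (hcv : Convex ℝ E) (hDE : E ⊆ D)
    (hneD : D.Nonempty) (hclD : IsClosed D) (hcvD : Convex ℝ D)
    (x : Ed d) (h : metricProj d D x ∈ E) :
    metricProj d E x = metricProj d D x := by
  obtain ⟨hmem, hmin⟩ := metricProj_spec hneD hclD hcvD x
  exact metricProj_eq_of hne hcl hcv x _ h (fun z hz => hmin z (hDE hz))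

/-- The metric projection is nonexpansive. -/
lemma metricProj_lipschitz {D : Set (Ed d)} (hne : D.Nonempty) (hcl : IsClosed D)
    (hcv : Convex ℝ D) : LipschitzWith 1 (metricProj d D) := by
  refine LipschitzWith.of_dist_le_mul fun x y => ?_
  set p := metricProj d D x with hp
  set q := metricProj d D y with hq
  have h1 := metricProj_var hne hcl hcv x q (metricProj_spec hne hcl hcv y).1
  have h2 := metricProj_var hne hcl hcv y p (metricProj_spec hne hcl hcv x).1
  simp only [NNReal.coe_one, one_mul]
  rw [dist_eq_norm, dist_eq_norm]
  by_cases hpq : p = q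
  · rw [hpq]; simp
  · have key : ‖p - q‖ ^ 2 ≤ ⟪x - y, p - q⟫ := by
      have e2 : ⟪x - p, q - p⟫ = -⟪x - p, p - q⟫ := by
        rw [← inner_neg_right]; congr 1; abel
      have e3 : ⟪x - p, p - q⟫ - ⟪y - q, p - q⟫ = ⟪x - y, p - q⟫ - ⟪p - q, p - q⟫ := by
        rw [← inner_sub_left, ← inner_sub_left]; congr 1; abel
      rw [← real_inner_self_eq_norm_sq]
      linarith [add_nonpos h1 h2]
    have hcs : ⟪x - y, p - q⟫ ≤ ‖x - y‖ * ‖p - q‖ := real_inner_le_norm _ _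
    have hnorm : 0 < ‖p - q‖ := by rw [norm_pos_iff]; exact sub_ne_zero.2 hpq
    nlinarith

end
section Chunk2
open Metric Set
variable {d : ℕ}

/-- Metric characterization of the intrinsic interior. -/
lemma mem_intrinsicInterior_iff' {S : Set (Ed d)} {x : Ed d} :
    x ∈ intrinsicInterior ℝ S ↔
      x ∈ S ∧ ∃ ε > 0, ∀ y ∈ (affineSpan ℝ S : Set (Ed d)), dist y x < ε → y ∈ S := by
  constructor
  · rintro ⟨⟨x', hx'⟩, hint, rfl⟩
    have hmemS : (⟨x', hx'⟩ : affineSpan ℝ S) ∈ (Subtype.val ⁻¹' S : Set (affineSpan ℝ S)) :=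
      interior_subset hint
    refine ⟨hmemS, ?_⟩
    rw [mem_interior_iff_mem_nhds, Metric.mem_nhds_iff] at hint
    obtain ⟨ε, hε, hball⟩ := hint
    refine ⟨ε, hε, fun y hy hdist => ?_⟩
    have : (⟨y, hy⟩ : affineSpan ℝ S) ∈ Metric.ball (⟨x', hx'⟩ : affineSpan ℝ S) ε := by
      rw [Metric.mem_ball, Subtype.dist_eq]
      exact hdist
    exact hball this
  · rintro ⟨hxS, ε, hε, h⟩
    have hxspan : x ∈ affineSpan ℝ S := subset_affineSpan ℝ S hxS
    refine ⟨⟨x, hxspan⟩, ?_, rfl⟩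
    rw [mem_interior_iff_mem_nhds, Metric.mem_nhds_iff]
    refine ⟨ε, hε, fun y hy => ?_⟩
    rw [Metric.mem_ball, Subtype.dist_eq] at hy
    exact h y.1 y.2 hy

lemma intrinsicInterior_subset' {S : Set (Ed d)} : intrinsicInterior ℝ S ⊆ S := by
  intro x hx
  exact (mem_intrinsicInterior_iff'.1 hx).1

/-- Prolongation past a relative interior point. -/
lemma exists_prolong {S : Set (Ed d)} (hS : Convex ℝ S) {x y : Ed d}
    (hx : x ∈ intrinsicInterior ℝ S) (hy : y ∈ S) :
    ∃ ε : ℝ, 0 < ε ∧ x + ε • (x - y) ∈ S := by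
  obtain ⟨hxS, ε₀, hε₀, hball⟩ := mem_intrinsicInterior_iff'.1 hx
  set ε := ε₀ / (2 * (‖x - y‖ + 1)) with hεdef
  have hnorm : (0:ℝ) ≤ ‖x - y‖ := norm_nonneg _
  have hεpos : 0 < ε := by positivity
  refine ⟨ε, hεpos, ?_⟩
  have hspan : x + ε • (x - y) ∈ affineSpan ℝ S := by
    have h1 : x ∈ affineSpan ℝ S := subset_affineSpan ℝ S hxS
    have h2 : y ∈ affineSpan ℝ S := subset_affineSpan ℝ S hy
    have := AffineSubspace.smul_vsub_vadd_mem (affineSpan ℝ S) ε h1 h2 h1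
    simpa [vsub_eq_sub, vadd_eq_add, add_comm] using this
  refine hball _ hspan ?_
  have hdist : dist (x + ε • (x - y)) x = ε * ‖x - y‖ := by
    rw [dist_eq_norm, add_sub_cancel_left, norm_smul, Real.norm_eq_abs, abs_of_pos hεpos]
  rw [hdist]
  have hkey : ε * (‖x - y‖ + 1) = ε₀ / 2 := by
    rw [hεdef]; field_simp
  nlinarith

/-- A linear functional that is `≤ 0` on a convex set and vanishes at a point of the
relative interior vanishes identically on the set (formulated with a base point). -/
lemma inner_eq_zero_of_relint {S : Set (Ed d)} (hS : Convex ℝ S) {x b : Ed d}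
    (hx : x ∈ intrinsicInterior ℝ S) (hb : ∀ z ∈ S, ⟪b, z - x⟫ ≤ 0) :
    ∀ z ∈ S, ⟪b, z - x⟫ = 0 := by
  intro z hz
  obtain ⟨ε, hε, hmem⟩ := exists_prolong hS hx hz
  have h1 := hb _ hmem
  have e : x + ε • (x - z) - x = -(ε • (z - x)) := by
    simp only [smul_sub]; abel
  rw [e, inner_neg_right, real_inner_smul_right] at h1
  have h2 := hb z hz
  nlinarith

end Chunk2
section Chunk3
open Metric Set
variable {d : ℕ}

/-- The canonical face of the cone `coneOf d t` at a point `p`. -/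
def canonFace (d : ℕ) (t : Finset (Ed d)) (p : Ed d) : Set (Ed d) :=
  {y | (∀ c' ∈ t, ⟪c', y⟫ ≤ 0) ∧ ∀ c' ∈ t, ⟪c', p⟫ = 0 → ⟪c', y⟫ = 0}

lemma canonFace_subset (t : Finset (Ed d)) (p : Ed d) : canonFace d t p ⊆ coneOf d t :=
  fun _ hy => hy.1

lemma zero_mem_canonFace (t : Finset (Ed d)) (p : Ed d) : (0 : Ed d) ∈ canonFace d t p :=
  ⟨fun c' _ => by simp, fun c' _ _ => by simp⟩

lemma convex_canonFace (t : Finset (Ed d)) (p : Ed d) : Convex ℝ (canonFace d t p) := by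
  intro x hx y hy a b ha hb hab
  constructor
  · intro c' hc'
    have h : ⟪c', a • x + b • y⟫ = a * ⟪c', x⟫ + b * ⟪c', y⟫ := by
      rw [inner_add_right, real_inner_smul_right, real_inner_smul_right]
    rw [h]; nlinarith [hx.1 c' hc', hy.1 c' hc']
  · intro c' hc' hcp
    have h : ⟪c', a • x + b • y⟫ = a * ⟪c', x⟫ + b * ⟪c', y⟫ := by
      rw [inner_add_right, real_inner_smul_right, real_inner_smul_right]
    rw [h, hx.2 c' hc' hcp, hy.2 c' hc' hcp]; ring

lemma isClosed_canonFace (t : Finset (Ed d)) (p : Ed d) : IsClosed (canonFace d t p) := by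
  have : canonFace d t p = coneOf d t ∩
      ⋂ c' ∈ (t : Set (Ed d)), {y : Ed d | ⟪c', p⟫ = 0 → ⟪c', y⟫ = 0} := by
    ext y
    simp only [canonFace, coneOf, Set.mem_setOf_eq, Set.mem_inter_iff, Set.mem_iInter]
    tauto
  rw [this]
  refine (isClosed_coneOf t).inter (isClosed_biInter fun c' _ => ?_)
  by_cases h : ⟪c', p⟫ = 0
  · have he : {y : Ed d | ⟪c', p⟫ = 0 → ⟪c', y⟫ = 0} = {y : Ed d | ⟪c', y⟫ = 0} := by
      ext y; exact ⟨fun hy => hy h, fun hy _ => hy⟩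
    rw [he]
    exact isClosed_eq (Continuous.inner continuous_const continuous_id) continuous_const
  · have he : {y : Ed d | ⟪c', p⟫ = 0 → ⟪c', y⟫ = 0} = univ := by
      ext y
      simp only [Set.mem_setOf_eq, Set.mem_univ, iff_true]
      exact fun hy => absurd hy h
    rw [he]; exact isClosed_univ

/-- The canonical face is a face. -/
lemma isFaceOf_canonFace (t : Finset (Ed d)) (p : Ed d) :
    IsFaceOf d (coneOf d t) (canonFace d t p) := by
  classical
  refine ⟨∑ c' ∈ t, if ⟪c', p⟫ = 0 then c' else 0, ?_, ?_⟩
  · intro x hx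
    rw [sum_inner]
    refine Finset.sum_nonpos fun c' hc' => ?_
    by_cases h : ⟪c', p⟫ = 0
    · rw [if_pos h]; exact hx c' hc'
    · rw [if_neg h, inner_zero_left]
  · ext y
    simp only [Set.mem_setOf_eq, sum_inner]
    constructor
    · rintro ⟨hy, hzero⟩
      refine ⟨fun c' hc' => hy c' hc', ?_⟩
      refine Finset.sum_eq_zero fun c' hc' => ?_
      by_cases h : ⟪c', p⟫ = 0
      · rw [if_pos h]; exact hzero c' hc' h
      · rw [if_neg h, inner_zero_left]
    · rintro ⟨hy, hsum⟩
      have hnonpos : ∀ c' ∈ t, ⟪(if ⟪c', p⟫ = 0 then c' else 0), y⟫ ≤ 0 := by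
        intro c' hc'
        by_cases h : ⟪c', p⟫ = 0
        · rw [if_pos h]; exact hy c' hc'
        · rw [if_neg h, inner_zero_left]
      have hall := (Finset.sum_eq_zero_iff_of_nonpos hnonpos).1 hsum
      refine ⟨hy, fun c' hc' h => ?_⟩
      have := hall c' hc'
      rwa [if_pos h] at this

/-- A point of a polyhedral cone lies in the relative interior of its canonical face. -/
lemma mem_relint_canonFace (t : Finset (Ed d)) {p : Ed d} (hp : p ∈ coneOf d t) :
    p ∈ intrinsicInterior ℝ (canonFace d t p) := by
  rw [mem_intrinsicInterior_iff']
  have hpF : p ∈ canonFace d t p := ⟨hp, fun c' _ h => h⟩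
  refine ⟨hpF, ?_⟩
  set U : Set (Ed d) := ⋂ c' ∈ (t : Set (Ed d)), {y : Ed d | ⟪c', p⟫ = 0 ∨ ⟪c', y⟫ < 0} with hU
  have hUopen : IsOpen U := by
    refine (t.finite_toSet).isOpen_biInter fun c' _ => ?_
    by_cases h : ⟪c', p⟫ = 0
    · have he : {y : Ed d | ⟪c', p⟫ = 0 ∨ ⟪c', y⟫ < 0} = univ := by
        ext y
        simp only [Set.mem_setOf_eq, Set.mem_univ, iff_true]
        exact Or.inl h
      rw [he]; exact isOpen_univ
    · have he : {y : Ed d | ⟪c', p⟫ = 0 ∨ ⟪c', y⟫ < 0} = {y : Ed d | ⟪c', y⟫ < 0} := by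
        ext y
        constructor
        · rintro (h' | h')
          · exact absurd h' h
          · exact h'
        · exact fun h' => Or.inr h'
      rw [he]
      exact isOpen_lt (Continuous.inner continuous_const continuous_id) continuous_const
  have hpU : p ∈ U := by
    rw [hU]
    refine Set.mem_biInter fun c' hc' => ?_
    by_cases h : ⟪c', p⟫ = 0
    · exact Or.inl h
    · exact Or.inr (lt_of_le_of_ne (hp c' hc') h)
  obtain ⟨ε, hε, hball⟩ := Metric.isOpen_iff.1 hUopen p hpU
  refine ⟨ε, hε, fun y hyspan hydist => ?_⟩
  have hyU : y ∈ U := hball (by rwa [Metric.mem_ball])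
  have hactive : ∀ c' ∈ t, ⟪c', p⟫ = 0 → ⟪c', y⟫ = 0 := by
    intro c' hc' h
    have hsub : canonFace d t p ⊆ (((ℝ ∙ c')ᗮ).toAffineSubspace : Set (Ed d)) := by
      intro z hz
      rw [SetLike.mem_coe, Submodule.mem_toAffineSubspace]
      rw [Submodule.mem_orthogonal_singleton_iff_inner_right]
      exact hz.2 c' hc' h
    have hspanle := affineSpan_le.2 hsub
    have := hspanle hyspan
    rw [Submodule.mem_toAffineSubspace,
      Submodule.mem_orthogonal_singleton_iff_inner_right] at this
    exact this
  refine ⟨fun c' hc' => ?_, hactive⟩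
  by_cases h : ⟪c', p⟫ = 0
  · exact le_of_eq (hactive c' hc' h)
  · have := Set.mem_iInter₂.1 hyU c' hc'
    rcases this with h' | h'
    · exact absurd h' h
    · exact le_of_lt h'

end Chunk3
section Chunk4
open Metric Set
open scoped Classical
variable {d : ℕ}

lemma coneOf_nonempty (t : Finset (Ed d)) : (coneOf d t).Nonempty := ⟨0, zero_mem_coneOf t⟩

/-- Any face whose relative interior contains `p` is the canonical face at `p`. -/
lemma face_eq_canonFace {t : Finset (Ed d)} {F : Set (Ed d)} {p : Ed d}
    (hF : IsFaceOf d (coneOf d t) F) (hp : p ∈ intrinsicInterior ℝ F) :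
    F = canonFace d t p := by
  obtain ⟨a, ha, hFeq⟩ := hF
  have hpF : p ∈ F := intrinsicInterior_subset' hp
  have hpC : p ∈ coneOf d t := by rw [hFeq] at hpF; exact hpF.1
  have hap : ⟪a, p⟫ = 0 := by rw [hFeq] at hpF; exact hpF.2
  have hFconv : Convex ℝ F := by
    rw [hFeq]
    intro x hx y hy α β hα hβ hαβ
    have h : ⟪a, α • x + β • y⟫ = α * ⟪a, x⟫ + β * ⟪a, y⟫ := by
      rw [inner_add_right, real_inner_smul_right, real_inner_smul_right]
    exact ⟨convex_coneOf t hx.1 hy.1 hα hβ hαβ, by rw [h, hx.2, hy.2]; ring⟩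
  apply Set.Subset.antisymm
  · -- F ⊆ canonFace
    intro y hy
    have hyC : y ∈ coneOf d t := by rw [hFeq] at hy; exact hy.1
    refine ⟨hyC, fun c' hc' hact => ?_⟩
    have hb : ∀ z ∈ F, ⟪c', z - p⟫ ≤ 0 := by
      intro z hz
      have hzC : z ∈ coneOf d t := by rw [hFeq] at hz; exact hz.1
      rw [inner_sub_right, hact]
      simpa using hzC c' hc'
    have := inner_eq_zero_of_relint hFconv hp hb y hy
    rw [inner_sub_right, hact] at this
    linarith
  · -- canonFace ⊆ F
    intro y hy
    have hyC : y ∈ coneOf d t := hy.1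
    rw [hFeq]
    refine ⟨hyC, ?_⟩
    have hrel := mem_relint_canonFace t hpC
    have hb : ∀ z ∈ canonFace d t p, ⟪a, z - p⟫ ≤ 0 := by
      intro z hz
      rw [inner_sub_right, hap]
      simpa using ha z hz.1
    have := inner_eq_zero_of_relint (convex_canonFace t p) hrel hb y hy
    rw [inner_sub_right, hap] at this
    linarith

/-- Membership in `Π_k` in terms of the canonical face at the projection. -/
lemma mem_Pik_iff (t : Finset (Ed d)) (k : ℕ) (x : Ed d) :
    x ∈ Pik d (coneOf d t) k ↔
      setDim d (canonFace d t (metricProj d (coneOf d t) x)) = k := by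
  have hne := coneOf_nonempty t
  have hcl := isClosed_coneOf t
  have hcv := convex_coneOf t
  have hpC : metricProj d (coneOf d t) x ∈ coneOf d t := (metricProj_spec hne hcl hcv x).1
  constructor
  · rintro ⟨F, hface, hrel, hdim⟩
    rw [← face_eq_canonFace hface hrel]
    exact hdim
  · intro hdim
    exact ⟨canonFace d t (metricProj d (coneOf d t) x), isFaceOf_canonFace t _,
      mem_relint_canonFace t hpC, hdim⟩

/-- Adding an inactive constraint. -/
lemma canonFace_insert_of_neg {t : Finset (Ed d)} {c p : Ed d} (hc : ⟪c, p⟫ < 0) :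
    canonFace d (insert c t) p = canonFace d t p ∩ {y | ⟪c, y⟫ ≤ 0} := by
  ext y
  constructor
  · rintro ⟨h1, h2⟩
    exact ⟨⟨fun c' hc' => h1 c' (Finset.mem_insert_of_mem hc'),
      fun c' hc' hact => h2 c' (Finset.mem_insert_of_mem hc') hact⟩,
      h1 c (Finset.mem_insert_self c t)⟩
  · rintro ⟨⟨h1, h2⟩, h3⟩
    constructor
    · intro c' hc'
      rcases Finset.mem_insert.1 hc' with rfl | hmem
      · exact h3
      · exact h1 c' hmem
    · intro c' hc' hact
      rcases Finset.mem_insert.1 hc' with rfl | hmem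
      · exact absurd hact (ne_of_lt hc)
      · exact h2 c' hmem hact

/-- Adding an active constraint that already vanishes on the face. -/
lemma canonFace_insert_of_zero {t : Finset (Ed d)} {c p : Ed d} (hc : ⟪c, p⟫ = 0)
    (hsub : ∀ y ∈ canonFace d t p, ⟪c, y⟫ = 0) :
    canonFace d (insert c t) p = canonFace d t p := by
  ext y
  constructor
  · rintro ⟨h1, h2⟩
    exact ⟨fun c' hc' => h1 c' (Finset.mem_insert_of_mem hc'),
      fun c' hc' hact => h2 c' (Finset.mem_insert_of_mem hc') hact⟩
  · rintro ⟨h1, h2⟩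
    have hy0 : ⟪c, y⟫ = 0 := hsub y ⟨h1, h2⟩
    constructor
    · intro c' hc'
      rcases Finset.mem_insert.1 hc' with rfl | hmem
      · exact le_of_eq hy0
      · exact h1 c' hmem
    · intro c' hc' hact
      rcases Finset.mem_insert.1 hc' with rfl | hmem
      · exact hy0
      · exact h2 c' hmem hact

/-- Cutting a face by a halfspace whose boundary avoids a relative interior point
does not change the span. -/
lemma span_canonFace_inter_halfspace {t : Finset (Ed d)} {c p : Ed d}
    (hp : p ∈ coneOf d t) (hc : ⟪c, p⟫ < 0) :
    Submodule.span ℝ (canonFace d t p ∩ {y | ⟪c, y⟫ ≤ 0}) =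
      Submodule.span ℝ (canonFace d t p) := by
  apply le_antisymm (Submodule.span_mono Set.inter_subset_left)
  rw [Submodule.span_le]
  intro y hy
  have hpF : p ∈ canonFace d t p := ⟨hp, fun c' _ h => h⟩
  set M := |⟪c, y⟫ - ⟪c, p⟫| with hM
  have hMnn : 0 ≤ M := abs_nonneg _
  set θ : ℝ := min 1 (-⟪c, p⟫ / (2 * (M + 1))) with hθdef
  have hθpos : 0 < θ := by
    refine lt_min one_pos (div_pos (by linarith) (by positivity))
  have hθ1 : θ ≤ 1 := min_le_left _ _
  set z := p + θ • (y - p) with hz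
  have hzval : ⟪c, z⟫ < 0 := by
    have hzv : ⟪c, z⟫ = ⟪c, p⟫ + θ * (⟪c, y⟫ - ⟪c, p⟫) := by
      rw [hz, inner_add_right, real_inner_smul_right, inner_sub_right]
    have hb : θ * (⟪c, y⟫ - ⟪c, p⟫) ≤ θ * M := by
      have := le_abs_self (⟪c, y⟫ - ⟪c, p⟫)
      nlinarith
    have hb2 : θ * M ≤ -⟪c, p⟫ / (2 * (M + 1)) * M := by
      have := min_le_right 1 (-⟪c, p⟫ / (2 * (M + 1)))
      nlinarith
    have hb3 : -⟪c, p⟫ / (2 * (M + 1)) * M < -⟪c, p⟫ := by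
      rw [div_mul_eq_mul_div, div_lt_iff₀ (by positivity)]
      nlinarith
    linarith
  have hzF : z ∈ canonFace d t p := by
    have hcomb : z = (1 - θ) • p + θ • y := by
      rw [hz, sub_smul, one_smul, smul_sub]
      abel
    rw [hcomb]
    exact convex_canonFace t p hpF hy (by linarith) (le_of_lt hθpos) (by ring)
  have hzmem : z ∈ canonFace d t p ∩ {y | ⟪c, y⟫ ≤ 0} := ⟨hzF, le_of_lt hzval⟩
  have hpmem : p ∈ canonFace d t p ∩ {y | ⟪c, y⟫ ≤ 0} := ⟨hpF, le_of_lt hc⟩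
  have hyeq : y = p + θ⁻¹ • (z - p) := by
    rw [hz]
    rw [add_sub_cancel_left, smul_smul, inv_mul_cancel₀ (ne_of_gt hθpos), one_smul]
    abel
  rw [hyeq]
  have hzspan := Submodule.subset_span (R := ℝ) hzmem
  have hpspan := Submodule.subset_span (R := ℝ) hpmem
  exact Submodule.add_mem _ hpspan (Submodule.smul_mem _ _ (Submodule.sub_mem _ hzspan hpspan))

end Chunk4
section Chunk5
open Metric Set
open scoped Classical
variable {d : ℕ}

lemma coneOf_insert_subset (b : Ed d) (t : Finset (Ed d)) :
    coneOf d (insert b t) ⊆ coneOf d t :=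
  fun y hy c' hc' => hy c' (Finset.mem_insert_of_mem hc')

lemma mem_coneOf_insert {b y : Ed d} {t : Finset (Ed d)} :
    y ∈ coneOf d (insert b t) ↔ y ∈ coneOf d t ∧ ⟪b, y⟫ ≤ 0 := by
  constructor
  · intro hy
    exact ⟨fun c' hc' => hy c' (Finset.mem_insert_of_mem hc'), hy b (Finset.mem_insert_self b t)⟩
  · rintro ⟨h1, h2⟩ c' hc'
    rcases Finset.mem_insert.1 hc' with rfl | hmem
    · exact h2
    · exact h1 c' hmem

/-- If the projection to the cone is strictly on the positive side of `b`, then the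
projection to the cone cut by `⟪b,·⟫ ≤ 0` lies on the hyperplane. -/
lemma proj_insert_eq_zero {t : Finset (Ed d)} {b x : Ed d}
    (hb : 0 < ⟪b, metricProj d (coneOf d t) x⟫) :
    ⟪b, metricProj d (coneOf d (insert b t)) x⟫ = 0 := by
  set C := coneOf d t with hC
  set D := coneOf d (insert b t) with hD
  have hneC := coneOf_nonempty t
  have hclC := isClosed_coneOf t
  have hcvC := convex_coneOf t
  have hneD := coneOf_nonempty (insert b t)
  have hclD := isClosed_coneOf (insert b t)
  have hcvD := convex_coneOf (insert b t)
  set p := metricProj d C x with hp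
  set q := metricProj d D x with hq
  have hqD : q ∈ D := (metricProj_spec hneD hclD hcvD x).1
  have hqC : q ∈ C := coneOf_insert_subset b t hqD
  have hqle : ⟪b, q⟫ ≤ 0 := (mem_coneOf_insert.1 hqD).2
  rcases eq_or_lt_of_le hqle with h | hqlt
  · exact h
  exfalso
  -- q is strictly inside, p strictly outside; find a better point on the segment
  have hpq : p ≠ q := by
    intro h
    rw [h] at hb; linarith
  have hf1f0 : dist x p < dist x q := by
    have hle : dist x p ≤ dist x q := (metricProj_spec hneC hclC hcvC x).2 q hqC
    rcases lt_or_eq_of_le hle with h | h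
    · exact h
    · exfalso
      have : metricProj d C x = q := by
        apply metricProj_eq_of hneC hclC hcvC x q hqC
        intro z hz
        rw [← h]
        exact (metricProj_spec hneC hclC hcvC x).2 z hz
      exact hpq this
  set α := ⟪b, q⟫ with hα
  set β := ⟪b, p⟫ with hβ
  have hαneg : α < 0 := hqlt
  have hβpos : 0 < β := hb
  set θ : ℝ := (-α) / (β - α) with hθ
  have hθpos : 0 < θ := div_pos (by linarith) (by linarith)
  have hθlt1 : θ < 1 := by
    rw [hθ, div_lt_one (by linarith)]
    linarith
  set r := q + θ • (p - q) with hr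
  have hrC : r ∈ C := by
    have hcomb : r = (1 - θ) • q + θ • p := by
      rw [hr, sub_smul, one_smul, smul_sub]; abel
    rw [hcomb]
    exact hcvC hqC ((metricProj_spec hneC hclC hcvC x).1) (by linarith) (le_of_lt hθpos) (by ring)
  have hrb : ⟪b, r⟫ = 0 := by
    rw [hr, inner_add_right, real_inner_smul_right, inner_sub_right]
    rw [← hα, ← hβ, hθ]
    have hne : β - α ≠ 0 := ne_of_gt (by linarith)
    field_simp; ring
  have hrD : r ∈ D := mem_coneOf_insert.2 ⟨hrC, le_of_eq hrb⟩
  -- strict convexity of the squared distance gives dist x r < dist x q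
  have hkey : dist x r < dist x q := by
    have e1 : x - r = (x - q) - θ • (p - q) := by rw [hr]; abel
    have e2 : x - p = (x - q) - (p - q) := by abel
    have h1 : ‖x - r‖ ^ 2 = ‖x - q‖ ^ 2 - 2 * (θ * ⟪x - q, p - q⟫) + θ ^ 2 * ‖p - q‖ ^ 2 := by
      rw [e1, norm_sub_sq_real, real_inner_smul_right, norm_smul, Real.norm_eq_abs,
        abs_of_pos hθpos, mul_pow]
    have h2 : ‖x - p‖ ^ 2 = ‖x - q‖ ^ 2 - 2 * ⟪x - q, p - q⟫ + ‖p - q‖ ^ 2 := by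
      rw [e2, norm_sub_sq_real]
    have h3 : ‖x - p‖ < ‖x - q‖ := by
      rw [dist_eq_norm, dist_eq_norm] at hf1f0; exact hf1f0
    have hsq3 : ‖x - p‖ ^ 2 < ‖x - q‖ ^ 2 := by
      nlinarith [norm_nonneg (x - p), norm_nonneg (x - q)]
    have hθθ : 0 ≤ θ * (1 - θ) := mul_nonneg (le_of_lt hθpos) (by linarith)
    have hsq : ‖x - r‖ ^ 2 < ‖x - q‖ ^ 2 := by
      nlinarith [mul_nonneg hθθ (sq_nonneg ‖p - q‖), mul_pos hθpos (sub_pos.2 hsq3)]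
    rw [dist_eq_norm, dist_eq_norm]
    nlinarith [norm_nonneg (x - r), norm_nonneg (x - q)]
  have := (metricProj_spec hneD hclD hcvD x).2 r hrD
  rw [← hq] at this
  linarith

end Chunk5
section Chunk6
open Metric Set
open scoped Classical
variable {d : ℕ}

lemma coneOf_mono {t t' : Finset (Ed d)} (h : t ⊆ t') : coneOf d t' ⊆ coneOf d t :=
  fun y hy c' hc' => hy c' (h hc')

lemma setDim_canonFace_insert_neg {t : Finset (Ed d)} {b p : Ed d}
    (hp : p ∈ coneOf d t) (hb : ⟪b, p⟫ < 0) :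
    setDim d (canonFace d (insert b t) p) = setDim d (canonFace d t p) := by
  rw [setDim, setDim, canonFace_insert_of_neg hb, span_canonFace_inter_halfspace hp hb]

/-- The key pointwise dichotomy, valid outside the bad set. -/
lemma pointwise_main (t : Finset (Ed d)) (c : Ed d) (k : ℕ) (x : Ed d)
    (hgood : ⟪c, metricProj d (coneOf d t) x⟫ = 0 →
      ∀ y ∈ canonFace d t (metricProj d (coneOf d t) x), ⟪c, y⟫ = 0) :
    ((x ∈ Pik d (coneOf d t) k ↔ x ∈ Pik d (coneOf d (insert c t)) k) ∧
     (x ∈ Pik d (coneOf d (insert c (insert (-c) t))) k ↔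
       x ∈ Pik d (coneOf d (insert (-c) t)) k)) ∨
    ((x ∈ Pik d (coneOf d t) k ↔ x ∈ Pik d (coneOf d (insert (-c) t)) k) ∧
     (x ∈ Pik d (coneOf d (insert c (insert (-c) t))) k ↔
       x ∈ Pik d (coneOf d (insert c t)) k)) := by
  set p := metricProj d (coneOf d t) x with hpdef
  have hpC : p ∈ coneOf d t :=
    (metricProj_spec (coneOf_nonempty t) (isClosed_coneOf t) (convex_coneOf t) x).1
  rcases lt_trichotomy ⟪c, p⟫ 0 with hlt | heq | hgt
  · -- Case a: strictly negative side
    left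
    constructor
    · -- C ↔ Cle
      have hmem : p ∈ coneOf d (insert c t) := mem_coneOf_insert.2 ⟨hpC, le_of_lt hlt⟩
      have hproj : metricProj d (coneOf d (insert c t)) x = p :=
        metricProj_subset_eq (coneOf_nonempty _) (isClosed_coneOf _) (convex_coneOf _)
          (coneOf_insert_subset c t) (coneOf_nonempty t) (isClosed_coneOf t)
          (convex_coneOf t) x hmem
      rw [mem_Pik_iff, mem_Pik_iff, hproj, ← hpdef, setDim_canonFace_insert_neg hpC hlt]
    · -- CH ↔ Cge
      have hbpos : 0 < ⟪-c, p⟫ := by rw [inner_neg_left]; linarith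
      have hq0 : ⟪-c, metricProj d (coneOf d (insert (-c) t)) x⟫ = 0 :=
        proj_insert_eq_zero (by rw [← hpdef]; exact hbpos)
      set q := metricProj d (coneOf d (insert (-c) t)) x with hqdef
      have hcq : ⟪c, q⟫ = 0 := by
        rw [inner_neg_left, neg_eq_zero] at hq0; exact hq0
      have hqGe : q ∈ coneOf d (insert (-c) t) :=
        (metricProj_spec (coneOf_nonempty _) (isClosed_coneOf _) (convex_coneOf _) x).1
      have hqCH : q ∈ coneOf d (insert c (insert (-c) t)) :=
        mem_coneOf_insert.2 ⟨hqGe, le_of_eq hcq⟩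
      have hproj : metricProj d (coneOf d (insert c (insert (-c) t))) x = q :=
        metricProj_subset_eq (coneOf_nonempty _) (isClosed_coneOf _) (convex_coneOf _)
          (coneOf_insert_subset _ _) (coneOf_nonempty _) (isClosed_coneOf _)
          (convex_coneOf _) x hqCH
      have hface : canonFace d (insert c (insert (-c) t)) q = canonFace d (insert (-c) t) q := by
        refine canonFace_insert_of_zero hcq fun y hy => ?_
        have := hy.2 (-c) (Finset.mem_insert_self _ _) hq0
        rw [inner_neg_left, neg_eq_zero] at this
        exact this
      rw [mem_Pik_iff, mem_Pik_iff, hproj, ← hqdef, hface]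
  · -- Case c: on the hyperplane, with a good face
    have hall := hgood heq
    have hnegzero : ⟪-c, p⟫ = 0 := by rw [inner_neg_left, heq]; ring
    have hmemLe : p ∈ coneOf d (insert c t) := mem_coneOf_insert.2 ⟨hpC, le_of_eq heq⟩
    have hmemGe : p ∈ coneOf d (insert (-c) t) := mem_coneOf_insert.2 ⟨hpC, le_of_eq hnegzero⟩
    have hmemH : p ∈ coneOf d (insert c (insert (-c) t)) :=
      mem_coneOf_insert.2 ⟨hmemGe, le_of_eq heq⟩
    have hprojLe : metricProj d (coneOf d (insert c t)) x = p :=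
      metricProj_subset_eq (coneOf_nonempty _) (isClosed_coneOf _) (convex_coneOf _)
        (coneOf_insert_subset c t) (coneOf_nonempty t) (isClosed_coneOf t)
        (convex_coneOf t) x hmemLe
    have hprojGe : metricProj d (coneOf d (insert (-c) t)) x = p :=
      metricProj_subset_eq (coneOf_nonempty _) (isClosed_coneOf _) (convex_coneOf _)
        (coneOf_insert_subset (-c) t) (coneOf_nonempty t) (isClosed_coneOf t)
        (convex_coneOf t) x hmemGe
    have hprojH : metricProj d (coneOf d (insert c (insert (-c) t))) x = p :=
      metricProj_subset_eq (coneOf_nonempty _) (isClosed_coneOf _) (convex_coneOf _)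
        (coneOf_mono (fun a ha => Finset.mem_insert_of_mem (Finset.mem_insert_of_mem ha)))
        (coneOf_nonempty t) (isClosed_coneOf t) (convex_coneOf t) x hmemH
    have hfaceLe : canonFace d (insert c t) p = canonFace d t p :=
      canonFace_insert_of_zero heq hall
    have hfaceGe : canonFace d (insert (-c) t) p = canonFace d t p := by
      refine canonFace_insert_of_zero hnegzero fun y hy => ?_
      rw [inner_neg_left, neg_eq_zero]
      exact hall y hy
    have hfaceH : canonFace d (insert c (insert (-c) t)) p = canonFace d t p := by
      rw [canonFace_insert_of_zero heq, hfaceGe]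
      intro y hy
      rw [hfaceGe] at hy
      exact hall y hy
    left
    constructor
    · rw [mem_Pik_iff, mem_Pik_iff, hprojLe, ← hpdef, hfaceLe]
    · rw [mem_Pik_iff, mem_Pik_iff, hprojH, hprojGe, hfaceH, hfaceGe]
  · -- Case b: strictly positive side
    right
    have hbneg : ⟪-c, p⟫ < 0 := by rw [inner_neg_left]; linarith
    constructor
    · have hmem : p ∈ coneOf d (insert (-c) t) := mem_coneOf_insert.2 ⟨hpC, le_of_lt hbneg⟩
      have hproj : metricProj d (coneOf d (insert (-c) t)) x = p :=
        metricProj_subset_eq (coneOf_nonempty _) (isClosed_coneOf _) (convex_coneOf _)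
          (coneOf_insert_subset (-c) t) (coneOf_nonempty t) (isClosed_coneOf t)
          (convex_coneOf t) x hmem
      rw [mem_Pik_iff, mem_Pik_iff, hproj, ← hpdef, setDim_canonFace_insert_neg hpC hbneg]
    · have hq0 : ⟪c, metricProj d (coneOf d (insert c t)) x⟫ = 0 :=
        proj_insert_eq_zero (by rw [← hpdef]; exact hgt)
      set q := metricProj d (coneOf d (insert c t)) x with hqdef
      have hnq : ⟪-c, q⟫ = 0 := by rw [inner_neg_left, hq0]; ring
      have hqLe : q ∈ coneOf d (insert c t) :=
        (metricProj_spec (coneOf_nonempty _) (isClosed_coneOf _) (convex_coneOf _) x).1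
      have hqCH : q ∈ coneOf d (insert c (insert (-c) t)) := by
        rw [Finset.insert_comm]
        exact mem_coneOf_insert.2 ⟨hqLe, le_of_eq hnq⟩
      have hproj : metricProj d (coneOf d (insert c (insert (-c) t))) x = q :=
        metricProj_subset_eq (coneOf_nonempty _) (isClosed_coneOf _) (convex_coneOf _)
          (by
            rw [Finset.insert_comm]
            exact coneOf_insert_subset _ _)
          (coneOf_nonempty _) (isClosed_coneOf _) (convex_coneOf _) x hqCH
      have hface : canonFace d (insert c (insert (-c) t)) q = canonFace d (insert c t) q := by
        rw [Finset.insert_comm]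
        refine canonFace_insert_of_zero hnq fun y hy => ?_
        rw [inner_neg_left, neg_eq_zero]
        exact hy.2 c (Finset.mem_insert_self _ _) hq0
      rw [mem_Pik_iff, mem_Pik_iff, hproj, ← hqdef, hface]

end Chunk6
section Chunk7
open Metric Set MeasureTheory
open scoped Classical
variable {d : ℕ}

/-- The face of the cone where the constraints in `T` are active. -/
def faceOfSet (d : ℕ) (t T : Finset (Ed d)) : Set (Ed d) :=
  {y | (∀ c' ∈ t, ⟪c', y⟫ ≤ 0) ∧ ∀ c' ∈ T, ⟪c', y⟫ = 0}

lemma canonFace_eq_faceOfSet (t : Finset (Ed d)) (p : Ed d) :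
    canonFace d t p = faceOfSet d t (t.filter fun c' => ⟪c', p⟫ = 0) := by
  ext y
  constructor
  · rintro ⟨h1, h2⟩
    refine ⟨h1, fun c' hc' => ?_⟩
    rw [Finset.mem_filter] at hc'
    exact h2 c' hc'.1 hc'.2
  · rintro ⟨h1, h2⟩
    exact ⟨h1, fun c' hc' hact => h2 c' (Finset.mem_filter.2 ⟨hc', hact⟩)⟩

lemma submodule_null {V : Submodule ℝ (Ed d)} (h : Module.finrank ℝ V < d) :
    volume (V : Set (Ed d)) = 0 := by
  refine Measure.addHaar_submodule _ _ fun he => ?_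
  rw [he, finrank_top, finrank_euclideanSpace_fin] at h
  exact lt_irrefl _ h

/-- The bad set has measure zero. -/
lemma badSet_null (t : Finset (Ed d)) (c : Ed d) :
    volume {x : Ed d | ⟪c, metricProj d (coneOf d t) x⟫ = 0 ∧
      ¬ ∀ y ∈ canonFace d t (metricProj d (coneOf d t) x), ⟪c, y⟫ = 0} = 0 := by
  set S : Set (Finset (Ed d)) :=
    {T | T ∈ t.powerset ∧ ¬ Submodule.span ℝ (faceOfSet d t T) ≤ (ℝ ∙ c)ᗮ} with hS
  set V : Finset (Ed d) → Submodule ℝ (Ed d) := fun T =>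
    (Submodule.span ℝ (faceOfSet d t T) ⊓ (ℝ ∙ c)ᗮ) ⊔ (Submodule.span ℝ (faceOfSet d t T))ᗮ
    with hV
  have hsub : {x : Ed d | ⟪c, metricProj d (coneOf d t) x⟫ = 0 ∧
      ¬ ∀ y ∈ canonFace d t (metricProj d (coneOf d t) x), ⟪c, y⟫ = 0} ⊆
      ⋃ T ∈ S, (V T : Set (Ed d)) := by
    rintro x ⟨hx0, hxbad⟩
    set p := metricProj d (coneOf d t) x with hpdef
    have hpC : p ∈ coneOf d t :=
      (metricProj_spec (coneOf_nonempty t) (isClosed_coneOf t) (convex_coneOf t) x).1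
    set T := t.filter fun c' => ⟪c', p⟫ = 0 with hT
    have hface : canonFace d t p = faceOfSet d t T := canonFace_eq_faceOfSet t p
    set W := Submodule.span ℝ (faceOfSet d t T) with hW
    -- the span is not contained in the hyperplane
    have hnotle : ¬ W ≤ (ℝ ∙ c)ᗮ := by
      intro hle
      apply hxbad
      intro y hy
      have : y ∈ W := by
        rw [hW]
        exact Submodule.subset_span (by rw [← hface]; exact hy)
      exact Submodule.mem_orthogonal_singleton_iff_inner_right.1 (hle this)
    have hTS : T ∈ S := ⟨Finset.mem_powerset.2 (Finset.filter_subset _ _), hnotle⟩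
    -- x belongs to V T
    have hpW : p ∈ W := by
      rw [hW]
      exact Submodule.subset_span (by rw [← hface]; exact ⟨hpC, fun c' _ h => h⟩)
    have hpOrth : p ∈ (ℝ ∙ c)ᗮ :=
      Submodule.mem_orthogonal_singleton_iff_inner_right.2 hx0
    -- x - p is orthogonal to W
    have hvar := metricProj_var (coneOf_nonempty t) (isClosed_coneOf t) (convex_coneOf t) x
    have hb : ∀ z ∈ canonFace d t p, ⟪x - p, z - p⟫ ≤ 0 := fun z hz => hvar z hz.1
    have hzero := inner_eq_zero_of_relint (convex_canonFace t p)
      (mem_relint_canonFace t hpC) hb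
    have hp0 : ⟪x - p, p⟫ = 0 := by
      have := hzero 0 (zero_mem_canonFace t p)
      rw [zero_sub, inner_neg_right, neg_eq_zero] at this
      exact this
    have hInner : ∀ z ∈ canonFace d t p, ⟪x - p, z⟫ = 0 := by
      intro z hz
      have h1 := hzero z hz
      rw [inner_sub_right, hp0, sub_zero] at h1
      exact h1
    have hWorth : W ≤ (ℝ ∙ (x - p))ᗮ := by
      rw [hW, Submodule.span_le]
      intro z hz
      rw [SetLike.mem_coe, Submodule.mem_orthogonal_singleton_iff_inner_right]
      exact hInner z (by rw [hface]; exact hz)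
    have hxpOrth : x - p ∈ Wᗮ := by
      rw [Submodule.mem_orthogonal]
      intro u hu
      rw [real_inner_comm]
      exact Submodule.mem_orthogonal_singleton_iff_inner_right.1 (hWorth hu)
    have hxV : x ∈ V T := by
      have h1 : p ∈ V T := Submodule.mem_sup_left ⟨hpW, hpOrth⟩
      have h2 : x - p ∈ V T := Submodule.mem_sup_right hxpOrth
      have := Submodule.add_mem (V T) h1 h2
      have he : p + (x - p) = x := by abel
      rwa [he] at this
    exact Set.mem_biUnion hTS hxV
  refine measure_mono_null hsub ?_
  have hSfin : S.Finite := Set.Finite.subset (t.powerset).finite_toSet fun T hT => hT.1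
  rw [measure_biUnion_null_iff hSfin.countable]
  intro T hT
  -- dimension count
  set W := Submodule.span ℝ (faceOfSet d t T) with hW
  have hlt : W ⊓ (ℝ ∙ c)ᗮ < W := by
    refine lt_of_le_of_ne inf_le_left fun heq => ?_
    exact hT.2 (inf_eq_left.1 heq)
  have ha : Module.finrank ℝ ↥(W ⊓ (ℝ ∙ c)ᗮ) < Module.finrank ℝ W :=
    Submodule.finrank_lt_finrank_of_lt hlt
  have hb : Module.finrank ℝ W + Module.finrank ℝ Wᗮ = d := by
    rw [Submodule.finrank_add_finrank_orthogonal, finrank_euclideanSpace_fin]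
  have hVT : V T = (W ⊓ (ℝ ∙ c)ᗮ) ⊔ Wᗮ := rfl
  have hsup : Module.finrank ℝ ↥((W ⊓ (ℝ ∙ c)ᗮ) ⊔ Wᗮ) ≤
      Module.finrank ℝ ↥(W ⊓ (ℝ ∙ c)ᗮ) + Module.finrank ℝ Wᗮ := by
    have := Submodule.finrank_sup_add_finrank_inf_eq (W ⊓ (ℝ ∙ c)ᗮ) Wᗮ
    omega
  refine submodule_null ?_
  rw [hVT]
  omega

end Chunk7
section Chunk8
open Metric Set MeasureTheory
open scoped Classical ENNReal
variable {d : ℕ}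

lemma measurableSet_pattern (t T : Finset (Ed d)) :
    MeasurableSet {p : Ed d | ∀ c' ∈ t, (⟪c', p⟫ = 0 ↔ c' ∈ T)} := by
  have he : {p : Ed d | ∀ c' ∈ t, (⟪c', p⟫ = 0 ↔ c' ∈ T)} =
      ⋂ c' ∈ (t : Set (Ed d)), {p : Ed d | ⟪c', p⟫ = 0 ↔ c' ∈ T} := by
    ext p; simp only [Set.mem_setOf_eq, Set.mem_iInter, Finset.mem_coe]
  rw [he]
  refine MeasurableSet.biInter (t.finite_toSet).countable fun c' _ => ?_
  by_cases h : c' ∈ T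
  · have : {p : Ed d | ⟪c', p⟫ = 0 ↔ c' ∈ T} = {p : Ed d | ⟪c', p⟫ = 0} := by
      ext p; simp [h]
    rw [this]
    exact (isClosed_eq (Continuous.inner continuous_const continuous_id)
      continuous_const).measurableSet
  · have : {p : Ed d | ⟪c', p⟫ = 0 ↔ c' ∈ T} = {p : Ed d | ⟪c', p⟫ = 0}ᶜ := by
      ext p; simp [h]
    rw [this]
    exact ((isClosed_eq (Continuous.inner continuous_const continuous_id)
      continuous_const).measurableSet).compl

lemma measurableSet_Pik (t : Finset (Ed d)) (k : ℕ) :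
    MeasurableSet (Pik d (coneOf d t) k) := by
  have hrepr : Pik d (coneOf d t) k = (metricProj d (coneOf d t)) ⁻¹'
      (⋃ T ∈ {T : Finset (Ed d) | T ∈ t.powerset ∧ setDim d (faceOfSet d t T) = k},
        {p : Ed d | ∀ c' ∈ t, (⟪c', p⟫ = 0 ↔ c' ∈ T)}) := by
    ext x
    rw [Set.mem_preimage, mem_Pik_iff]
    set p := metricProj d (coneOf d t) x with hpdef
    constructor
    · intro hdim
      refine Set.mem_biUnion (show (t.filter fun c' => ⟪c', p⟫ = 0) ∈ _ from ?_) ?_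
      · refine ⟨Finset.mem_powerset.2 (Finset.filter_subset _ _), ?_⟩
        rw [← canonFace_eq_faceOfSet]
        exact hdim
      · intro c' hc'
        constructor
        · intro h; exact Finset.mem_filter.2 ⟨hc', h⟩
        · intro h; exact (Finset.mem_filter.1 h).2
    · rintro ⟨U, ⟨T, rfl⟩, hU⟩
      simp only [Set.mem_iUnion, Set.mem_setOf_eq] at hU
      obtain ⟨⟨hTpow, hTdim⟩, hpat⟩ := hU
      have hTfil : (t.filter fun c' => ⟪c', p⟫ = 0) = T := by
        ext c'
        rw [Finset.mem_filter]
        constructor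
        · rintro ⟨hc', h⟩; exact (hpat c' hc').1 h
        · intro h
          have hc' : c' ∈ t := Finset.mem_powerset.1 hTpow h
          exact ⟨hc', (hpat c' hc').2 h⟩
      have hfeq : canonFace d t p = faceOfSet d t T := by
        rw [canonFace_eq_faceOfSet, hTfil]
      rw [hfeq]
      exact hTdim
  rw [hrepr]
  have hm : Measurable (metricProj d (coneOf d t)) :=
    (metricProj_lipschitz (coneOf_nonempty t) (isClosed_coneOf t)
      (convex_coneOf t)).continuous.measurable
  refine hm ?_
  have hfin : {T : Finset (Ed d) | T ∈ t.powerset ∧ setDim d (faceOfSet d t T) = k}.Finite :=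
    Set.Finite.subset (t.powerset).finite_toSet fun T hT => hT.1
  exact MeasurableSet.biUnion hfin.countable fun T _ => measurableSet_pattern t T

/-- The volume identity. -/
lemma vol_identity (t : Finset (Ed d)) (c : Ed d) (k : ℕ) :
    volume (Pik d (coneOf d t) k ∩ closedBall (0 : Ed d) 1)
      + volume (Pik d (coneOf d (insert c (insert (-c) t))) k ∩ closedBall (0 : Ed d) 1)
    = volume (Pik d (coneOf d (insert c t)) k ∩ closedBall (0 : Ed d) 1)
      + volume (Pik d (coneOf d (insert (-c) t)) k ∩ closedBall (0 : Ed d) 1) := by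
  set B := closedBall (0 : Ed d) 1 with hB
  set S1 := Pik d (coneOf d t) k ∩ B with hS1
  set S2 := Pik d (coneOf d (insert c (insert (-c) t))) k ∩ B with hS2
  set S3 := Pik d (coneOf d (insert c t)) k ∩ B with hS3
  set S4 := Pik d (coneOf d (insert (-c) t)) k ∩ B with hS4
  have hmB : MeasurableSet B := measurableSet_closedBall
  have hm1 : MeasurableSet S1 := (measurableSet_Pik t k).inter hmB
  have hm2 : MeasurableSet S2 := (measurableSet_Pik _ k).inter hmB
  have hm3 : MeasurableSet S3 := (measurableSet_Pik _ k).inter hmB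
  have hm4 : MeasurableSet S4 := (measurableSet_Pik _ k).inter hmB
  set f1 := S1.indicator (fun _ => (1 : ℝ≥0∞)) with hf1
  set f2 := S2.indicator (fun _ => (1 : ℝ≥0∞)) with hf2
  set f3 := S3.indicator (fun _ => (1 : ℝ≥0∞)) with hf3
  set f4 := S4.indicator (fun _ => (1 : ℝ≥0∞)) with hf4
  have hptwise : ∀ x : Ed d,
      (⟪c, metricProj d (coneOf d t) x⟫ = 0 →
        ∀ y ∈ canonFace d t (metricProj d (coneOf d t) x), ⟪c, y⟫ = 0) →
      f1 x + f2 x = f3 x + f4 x := by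
    intro x hx
    rcases pointwise_main t c k x hx with ⟨h1, h2⟩ | ⟨h1, h2⟩
    · simp only [hf1, hf2, hf3, hf4, hS1, hS2, hS3, hS4, Set.indicator_apply,
        Set.mem_inter_iff, h1, h2]
    · simp only [hf1, hf2, hf3, hf4, hS1, hS2, hS3, hS4, Set.indicator_apply,
        Set.mem_inter_iff, h1, h2]
      exact add_comm _ _
  have hae : f1 + f2 =ᵐ[volume] f3 + f4 := by
    rw [Filter.EventuallyEq, ae_iff]
    refine measure_mono_null ?_ (badSet_null t c)
    intro x hx
    simp only [Set.mem_setOf_eq] at hx ⊢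
    by_contra hbad
    rw [not_and_or] at hbad
    apply hx
    rcases hbad with hbad | hbad
    · exact hptwise x (fun h => absurd h hbad)
    · rw [Classical.not_not] at hbad
      exact hptwise x (fun _ => hbad)
  have hint : ∫⁻ x, (f1 + f2) x = ∫⁻ x, (f3 + f4) x := lintegral_congr_ae hae
  have hmeas1 : Measurable f1 := measurable_const.indicator hm1
  have hmeas3 : Measurable f3 := measurable_const.indicator hm3
  have e1 : ∫⁻ x, (f1 + f2) x = volume S1 + volume S2 := by
    simp only [Pi.add_apply]
    rw [lintegral_add_left hmeas1, hf1, hf2, lintegral_indicator_const hm1,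
      lintegral_indicator_const hm2, one_mul, one_mul]
  have e2 : ∫⁻ x, (f3 + f4) x = volume S3 + volume S4 := by
    simp only [Pi.add_apply]
    rw [lintegral_add_left hmeas3, hf3, hf4, lintegral_indicator_const hm3,
      lintegral_indicator_const hm4, one_mul, one_mul]
  rw [← e1, ← e2]
  exact hint

end Chunk8
/-- The spherical intrinsic volumes are valuations on polyhedral
cones. -/
theorem sphIntrinsicVol_valuation
    (d k : ℕ) (hk : k ≤ d) (C : Set (Ed d)) (hC : IsPolyCone d C)
    (c : Ed d) (hc : c ≠ 0) :
    sphIntrinsicVol d C k = sphIntrinsicVol d (C ∩ {y | ⟪c, y⟫ ≤ 0}) k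
      + sphIntrinsicVol d (C ∩ {y | 0 ≤ ⟪c, y⟫}) k
      - sphIntrinsicVol d (C ∩ {y | ⟪c, y⟫ = 0}) k := by
  classical
  obtain ⟨s, hCs⟩ := hC
  have hC' : C = coneOf d s := hCs
  have hle : coneOf d s ∩ {y : Ed d | ⟪c, y⟫ ≤ 0} = coneOf d (insert c s) := by
    ext y
    rw [Set.mem_inter_iff, mem_coneOf_insert]
    exact Iff.rfl
  have hge : coneOf d s ∩ {y : Ed d | 0 ≤ ⟪c, y⟫} = coneOf d (insert (-c) s) := by
    ext y
    rw [Set.mem_inter_iff, mem_coneOf_insert]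
    have : ⟪-c, y⟫ ≤ 0 ↔ 0 ≤ ⟪c, y⟫ := by rw [inner_neg_left]; exact neg_nonpos
    rw [this]
    exact Iff.rfl
  have hH : coneOf d s ∩ {y : Ed d | ⟪c, y⟫ = 0} = coneOf d (insert c (insert (-c) s)) := by
    ext y
    rw [mem_coneOf_insert, mem_coneOf_insert, Set.mem_inter_iff]
    constructor
    · rintro ⟨hyC, hy0⟩
      have hy0' : ⟪c, y⟫ = 0 := hy0
      refine ⟨⟨hyC, ?_⟩, le_of_eq hy0'⟩
      rw [inner_neg_left, hy0']; simp
    · rintro ⟨⟨hyC, hyneg⟩, hypos⟩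
      rw [inner_neg_left, neg_nonpos] at hyneg
      exact ⟨hyC, le_antisymm hypos hyneg⟩
  rw [hC', hle, hge, hH]
  set B := Metric.closedBall (0 : Ed d) 1 with hB
  have hBfin : volume B < ⊤ := (isCompact_closedBall (0 : Ed d) 1).measure_lt_top
  have hfin : ∀ S : Set (Ed d), volume (S ∩ B) ≠ ⊤ := fun S =>
    (lt_of_le_of_lt (measure_mono Set.inter_subset_right) hBfin).ne
  have hvol := vol_identity s c k
  have hreal := congrArg ENNReal.toReal hvol
  rw [ENNReal.toReal_add (hfin _) (hfin _), ENNReal.toReal_add (hfin _) (hfin _)] at hreal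
  unfold sphIntrinsicVol
  rw [← add_div, div_sub_div_same]
  congr 1
  linarith
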